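/- Fix k ≥ 2, weights p₁, …, p_k > 0 with Σ_ℓ p_ℓ = 1, standard deviations σ₁, …, σ_k > 0, and μ ∈ ℝ^k. Then every diagonal entry of the mean Fisher matrix of the Gaussian mixture satisfies 0 ≤ I_{jj}(μ) = (p_j²/σ_j⁴) ∫_ℝ (x − μ_j)² φ_{σ_j}(x − μ_j)² / g(x;μ) dx ≤ p_j/σ_j², uniformly in μ. In particular, all entries of I(μ) are bounded by a constant independent of μ, hence so is √(det I(μ)). -/

import Mathlib

open MeasureTheory

noncomputable section

/-- Density of a centered Gaussian with standard deviation `σ`. -/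
def gaussPdf (σ x : ℝ) : ℝ :=
  (Real.sqrt (2 * Real.pi * σ ^ 2))⁻¹ * Real.exp (-(x ^ 2) / (2 * σ ^ 2))

/-- Gaussian mixture density `g(x; μ) = ∑ ℓ pℓ φ_{σℓ}(x - μℓ)`. -/
def gaussMix {k : ℕ} (p σ μ : Fin k → ℝ) (x : ℝ) : ℝ :=
  ∑ ℓ, p ℓ * gaussPdf (σ ℓ) (x - μ ℓ)

/-- Mean Fisher matrix of the Gaussian mixture with fixed weights `p` and scales `σ`. -/
def meanFisher {k : ℕ} (p σ μ : Fin k → ℝ) : Matrix (Fin k) (Fin k) ℝ := fun j h =>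
  p j * p h / (σ j ^ 2 * σ h ^ 2) *
    ∫ x : ℝ,
      (x - μ j) * (x - μ h) * gaussPdf (σ j) (x - μ j) * gaussPdf (σ h) (x - μ h) /
        gaussMix p σ μ x

open Real Filter in
lemma integrable_sq_mul_exp {b : ℝ} (hb : 0 < b) :
    Integrable (fun x : ℝ => x ^ 2 * Real.exp (-b * x ^ 2)) := by
  have := integrable_rpow_mul_exp_neg_mul_sq hb (by norm_num : (-1 : ℝ) < 2)
  simpa [Real.rpow_two] using this

open Real Filter in
lemma integral_sq_mul_exp {b : ℝ} (hb : 0 < b) :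
    ∫ x : ℝ, x ^ 2 * Real.exp (-b * x ^ 2) = (2 * b)⁻¹ * Real.sqrt (Real.pi / b) := by
  set F : ℝ → ℝ := fun x => -(2 * b)⁻¹ * (x * Real.exp (-b * x ^ 2)) with hF
  have hderiv : ∀ x : ℝ, HasDerivAt F
      (x ^ 2 * Real.exp (-b * x ^ 2) - (2 * b)⁻¹ * Real.exp (-b * x ^ 2)) x := by
    intro x
    have h1 : HasDerivAt (fun x : ℝ => Real.exp (-b * x ^ 2))
        (Real.exp (-b * x ^ 2) * (-b * (2 * x))) x := by
      have : HasDerivAt (fun x : ℝ => -b * x ^ 2) (-b * (2 * x)) x := by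
        simpa using ((hasDerivAt_pow 2 x).const_mul (-b))
      exact this.exp
    have h2 : HasDerivAt (fun x : ℝ => x * Real.exp (-b * x ^ 2))
        (1 * Real.exp (-b * x ^ 2) + x * (Real.exp (-b * x ^ 2) * (-b * (2 * x)))) x :=
      (hasDerivAt_id x).mul h1
    have := h2.const_mul (-(2 * b)⁻¹)
    refine this.congr_deriv ?_
    have hb1 : (2 * b)⁻¹ * (2 * b) = 1 := inv_mul_cancel₀ (by positivity)
    linear_combination (x ^ 2 * Real.exp (-b * x ^ 2)) * hb1
  have hint : Integrable (fun x : ℝ =>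
      x ^ 2 * Real.exp (-b * x ^ 2) - (2 * b)⁻¹ * Real.exp (-b * x ^ 2)) :=
    (integrable_sq_mul_exp hb).sub ((integrable_exp_neg_mul_sq hb).const_mul _)
  have htop : Tendsto F atTop (nhds 0) := by
    have hexp : Tendsto (fun x : ℝ => Real.exp (-(1/2) * x)) atTop (nhds 0) := by
      have h0 := Real.tendsto_exp_neg_atTop_nhds_zero.comp
        (tendsto_id.const_mul_atTop (by norm_num : (0:ℝ) < 1/2))
      exact h0.congr (fun x => by simp [Function.comp, neg_mul])
    have h := (rpow_mul_exp_neg_mul_sq_isLittleO_exp_neg hb 1).tendsto_zero_of_tendsto hexp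
    have h' : Tendsto (fun x : ℝ => x * Real.exp (-b * x ^ 2)) atTop (nhds 0) := by
      refine h.congr' ?_
      filter_upwards [eventually_gt_atTop (0:ℝ)] with x hx
      rw [Real.rpow_one]
    have h2 := h'.const_mul (-(2 * b)⁻¹)
    rw [mul_zero] at h2
    exact h2
  have hbot : Tendsto F atBot (nhds 0) := by
    have h2 : Tendsto (fun x : ℝ => F (-x)) atTop (nhds 0) := by
      have hFneg : ∀ x : ℝ, F (-x) = -F x := by
        intro x; simp only [hF]; ring_nf
      have := htop.neg
      rw [neg_zero] at this
      exact this.congr (fun x => (hFneg x).symm)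
    have : Tendsto (fun x : ℝ => F (-(-x))) atBot (nhds 0) :=
      h2.comp tendsto_neg_atBot_atTop
    simpa using this
  have h0 : ∫ x : ℝ, (x ^ 2 * Real.exp (-b * x ^ 2) - (2 * b)⁻¹ * Real.exp (-b * x ^ 2)) = 0 := by
    rw [MeasureTheory.integral_of_hasDerivAt_of_tendsto hderiv hint hbot htop]
    simp
  rw [MeasureTheory.integral_sub (integrable_sq_mul_exp hb)
    ((integrable_exp_neg_mul_sq hb).const_mul _), sub_eq_zero] at h0
  rw [h0, integral_const_mul, integral_gaussian]

lemma gaussPdf_pos {s : ℝ} (hs : 0 < s) (x : ℝ) : 0 < gaussPdf s x := by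
  unfold gaussPdf
  positivity

lemma gaussPdf_eq (s : ℝ) (x : ℝ) :
    gaussPdf s x = (Real.sqrt (2 * Real.pi * s ^ 2))⁻¹ *
      Real.exp (-(2 * s ^ 2)⁻¹ * x ^ 2) := by
  unfold gaussPdf
  congr 1
  rw [neg_mul, neg_div, div_eq_inv_mul]

lemma integrable_sq_mul_gaussPdf {s : ℝ} (hs : 0 < s) (c : ℝ) :
    Integrable (fun x : ℝ => (x - c) ^ 2 * gaussPdf s (x - c)) := by
  have hb : 0 < (2 * s ^ 2)⁻¹ := by positivity
  have h1 : Integrable (fun x : ℝ => x ^ 2 * gaussPdf s x) := by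
    have := ((integrable_sq_mul_exp hb).const_mul ((Real.sqrt (2 * Real.pi * s ^ 2))⁻¹))
    refine this.congr ?_
    refine Filter.Eventually.of_forall (fun x => ?_)
    simp only
    rw [gaussPdf_eq s]
    ring
  exact h1.comp_sub_right c

lemma integral_sq_mul_gaussPdf {s : ℝ} (hs : 0 < s) (c : ℝ) :
    ∫ x : ℝ, (x - c) ^ 2 * gaussPdf s (x - c) = s ^ 2 := by
  rw [integral_sub_right_eq_self (fun x : ℝ => x ^ 2 * gaussPdf s x) c]
  have hb : 0 < (2 * s ^ 2)⁻¹ := by positivity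
  have : ∀ x : ℝ, x ^ 2 * gaussPdf s x =
      (Real.sqrt (2 * Real.pi * s ^ 2))⁻¹ * (x ^ 2 * Real.exp (-(2 * s ^ 2)⁻¹ * x ^ 2)) := by
    intro x; rw [gaussPdf_eq s]; ring
  simp_rw [this]
  rw [integral_const_mul, integral_sq_mul_exp hb]
  have h2 : (2 * ((2 * s ^ 2)⁻¹))⁻¹ = s ^ 2 := by
    field_simp
  have h3 : Real.pi / (2 * s ^ 2)⁻¹ = 2 * Real.pi * s ^ 2 := by
    field_simp
  rw [h2, h3]
  have h4 : 0 < Real.sqrt (2 * Real.pi * s ^ 2) := by positivity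
  field_simp

set_option maxHeartbeats 1000000 in
/-- for a Gaussian mixture with `k = m + 2 ≥ 2` components, fixed
positive weights summing to one and fixed positive scales, every diagonal entry of
the mean Fisher matrix satisfies `0 ≤ I_{jj}(μ) ≤ p_j/σ_j²` uniformly in `μ`; in
particular all entries of `I(μ)`, and `√(det I(μ))`, are bounded by constants
independent of `μ`. -/
theorem meanFisher_diag_bounded (m : ℕ) (p σ : Fin (m + 2) → ℝ)
    (hp : ∀ ℓ, 0 < p ℓ) (hsum : ∑ ℓ, p ℓ = 1) (hσ : ∀ ℓ, 0 < σ ℓ) :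
    (∀ (μ : Fin (m + 2) → ℝ) (j : Fin (m + 2)),
      0 ≤ meanFisher p σ μ j j ∧ meanFisher p σ μ j j ≤ p j / σ j ^ 2) ∧
    (∃ C : ℝ, ∀ (μ : Fin (m + 2) → ℝ) (j h : Fin (m + 2)),
      |meanFisher p σ μ j h| ≤ C) ∧
    (∃ C : ℝ, ∀ μ : Fin (m + 2) → ℝ, Real.sqrt (meanFisher p σ μ).det ≤ C) := by
  -- basic positivity facts
  have hmix_le : ∀ (μ : Fin (m+2) → ℝ) (j : Fin (m+2)) (x : ℝ),
      p j * gaussPdf (σ j) (x - μ j) ≤ gaussMix p σ μ x := by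
    intro μ j x
    unfold gaussMix
    exact Finset.single_le_sum (f := fun ℓ => p ℓ * gaussPdf (σ ℓ) (x - μ ℓ))
      (fun ℓ _ => le_of_lt (mul_pos (hp ℓ) (gaussPdf_pos (hσ ℓ) _))) (Finset.mem_univ j)
  have hmixpos : ∀ (μ : Fin (m+2) → ℝ) (x : ℝ), 0 < gaussMix p σ μ x := by
    intro μ x
    exact lt_of_lt_of_le (mul_pos (hp 0) (gaussPdf_pos (hσ 0) _)) (hmix_le μ 0 x)
  -- the pointwise bound
  have key : ∀ (μ : Fin (m+2) → ℝ) (j h : Fin (m+2)) (x : ℝ),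
      |(x - μ j) * (x - μ h) * gaussPdf (σ j) (x - μ j) * gaussPdf (σ h) (x - μ h) /
        gaussMix p σ μ x| ≤
      ((x - μ j) ^ 2 * gaussPdf (σ j) (x - μ j) / p j
        + (x - μ h) ^ 2 * gaussPdf (σ h) (x - μ h) / p h) / 2 := by
    intro μ j h x
    set a := x - μ j with ha
    set b := x - μ h with hb
    set A := gaussPdf (σ j) (x - μ j) with hA
    set B := gaussPdf (σ h) (x - μ h) with hB
    set G := gaussMix p σ μ x with hG
    have hApos : 0 < A := gaussPdf_pos (hσ j) _
    have hBpos : 0 < B := gaussPdf_pos (hσ h) _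
    have hGpos : 0 < G := hmixpos μ x
    have hpA : p j * A ≤ G := hmix_le μ j x
    have hpB : p h * B ≤ G := hmix_le μ h x
    have habs : |a * b * A * B / G| = |a| * |b| * A * B / G := by
      rw [abs_div, abs_of_pos hGpos, abs_mul, abs_mul, abs_mul,
        abs_of_pos hApos, abs_of_pos hBpos]
    rw [habs, div_le_iff₀ hGpos]
    have main : 2 * (p j * p h) * (|a| * |b| * A * B) ≤
        (a ^ 2 * A * p h + b ^ 2 * B * p j) * G := by
      have e1 : a ^ 2 * A * p h * (p h * B) ≤ a ^ 2 * A * p h * G :=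
        mul_le_mul_of_nonneg_left hpB
          (mul_nonneg (mul_nonneg (sq_nonneg a) hApos.le) (hp h).le)
      have e2 : b ^ 2 * B * p j * (p j * A) ≤ b ^ 2 * B * p j * G :=
        mul_le_mul_of_nonneg_left hpA
          (mul_nonneg (mul_nonneg (sq_nonneg b) hBpos.le) (hp j).le)
      have e0 : 2 * (|a| * |b|) * (p j * p h) ≤ a ^ 2 * p h ^ 2 + b ^ 2 * p j ^ 2 := by
        rcases abs_cases (a * b) with ⟨he, _⟩ | ⟨he, _⟩ <;>
          rw [← abs_mul, he] <;>
          [nlinarith [sq_nonneg (a * p h - b * p j)];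
           nlinarith [sq_nonneg (a * p h + b * p j)]]
      have e3 : (2 * (|a| * |b|) * (p j * p h)) * (A * B) ≤
          (a ^ 2 * p h ^ 2 + b ^ 2 * p j ^ 2) * (A * B) :=
        mul_le_mul_of_nonneg_right e0 (mul_pos hApos hBpos).le
      nlinarith [e1, e2, e3]
    have hZG : (2 * (p j * p h)) *
        (((a ^ 2 * A / p j + b ^ 2 * B / p h) / 2) * G) =
        (a ^ 2 * A * p h + b ^ 2 * B * p j) * G := by
      have hpj := (hp j).ne'
      have hph := (hp h).ne'
      field_simp
    have h2pp : (0:ℝ) < 2 * (p j * p h) := by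
      have := mul_pos (hp j) (hp h); linarith
    have := main.trans_eq hZG.symm
    exact le_of_mul_le_mul_left this h2pp
  -- integrable dominating functions
  have hIntSq : ∀ (μ : Fin (m+2) → ℝ) (j : Fin (m+2)),
      Integrable (fun x : ℝ => (x - μ j) ^ 2 * gaussPdf (σ j) (x - μ j) / p j) := by
    intro μ j
    exact (integrable_sq_mul_gaussPdf (hσ j) (μ j)).div_const (p j)
  have hIntSqVal : ∀ (μ : Fin (m+2) → ℝ) (j : Fin (m+2)),
      ∫ x : ℝ, (x - μ j) ^ 2 * gaussPdf (σ j) (x - μ j) / p j = σ j ^ 2 / p j := by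
    intro μ j
    rw [integral_div, integral_sq_mul_gaussPdf (hσ j)]
  -- uniform bound on all entries
  have hent : ∀ (μ : Fin (m+2) → ℝ) (j h : Fin (m+2)),
      |meanFisher p σ μ j h| ≤ (p j / σ j ^ 2 + p h / σ h ^ 2) / 2 := by
    intro μ j h
    have hc : (0:ℝ) ≤ p j * p h / (σ j ^ 2 * σ h ^ 2) :=
      div_nonneg (mul_pos (hp j) (hp h)).le
        (mul_pos (pow_pos (hσ j) 2) (pow_pos (hσ h) 2)).le
    unfold meanFisher
    rw [abs_mul, abs_of_nonneg hc]
    have hIntBound : Integrable (fun x : ℝ =>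
        ((x - μ j) ^ 2 * gaussPdf (σ j) (x - μ j) / p j
          + (x - μ h) ^ 2 * gaussPdf (σ h) (x - μ h) / p h) / 2) :=
      ((hIntSq μ j).add (hIntSq μ h)).div_const 2
    have h1 : |∫ x : ℝ, (x - μ j) * (x - μ h) * gaussPdf (σ j) (x - μ j) *
        gaussPdf (σ h) (x - μ h) / gaussMix p σ μ x| ≤
        (σ j ^ 2 / p j + σ h ^ 2 / p h) / 2 := by
      have hnorm := norm_integral_le_integral_norm (μ := volume)
        (f := fun x : ℝ => (x - μ j) * (x - μ h) * gaussPdf (σ j) (x - μ j) *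
          gaussPdf (σ h) (x - μ h) / gaussMix p σ μ x)
      rw [Real.norm_eq_abs] at hnorm
      refine hnorm.trans ?_
      have h2 : ∫ x : ℝ, ‖(x - μ j) * (x - μ h) * gaussPdf (σ j) (x - μ j) *
          gaussPdf (σ h) (x - μ h) / gaussMix p σ μ x‖ ≤
          ∫ x : ℝ, ((x - μ j) ^ 2 * gaussPdf (σ j) (x - μ j) / p j
            + (x - μ h) ^ 2 * gaussPdf (σ h) (x - μ h) / p h) / 2 := by
        refine integral_mono_of_nonneg ?_ hIntBound ?_
        · exact Filter.Eventually.of_forall (fun x => norm_nonneg _)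
        · exact Filter.Eventually.of_forall (fun x => by
            simp only [Real.norm_eq_abs]; exact key μ j h x)
      refine h2.trans_eq ?_
      rw [integral_div, integral_add (hIntSq μ j) (hIntSq μ h),
        hIntSqVal μ j, hIntSqVal μ h]
    have h3 := mul_le_mul_of_nonneg_left h1 hc
    refine h3.trans_eq ?_
    have hσj := (hσ j).ne'
    have hσh := (hσ h).ne'
    have hpj := (hp j).ne'
    have hph := (hp h).ne'
    field_simp
    ring
  refine ⟨?_, ?_, ?_⟩
  · -- diagonal bounds
    intro μ j
    set a : ℝ → ℝ := fun x => x - μ j with haa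
    have hc : (0:ℝ) ≤ p j * p j / (σ j ^ 2 * σ j ^ 2) :=
      div_nonneg (mul_pos (hp j) (hp j)).le
        (mul_pos (pow_pos (hσ j) 2) (pow_pos (hσ j) 2)).le
    have hfnn : ∀ x : ℝ, 0 ≤ (x - μ j) * (x - μ j) * gaussPdf (σ j) (x - μ j) *
        gaussPdf (σ j) (x - μ j) / gaussMix p σ μ x := by
      intro x
      refine div_nonneg ?_ (hmixpos μ x).le
      nlinarith [sq_nonneg ((x - μ j) * gaussPdf (σ j) (x - μ j))]
    constructor
    · unfold meanFisher
      exact mul_nonneg hc (integral_nonneg hfnn)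
    · unfold meanFisher
      have hle : ∀ x : ℝ, (x - μ j) * (x - μ j) * gaussPdf (σ j) (x - μ j) *
          gaussPdf (σ j) (x - μ j) / gaussMix p σ μ x ≤
          (x - μ j) ^ 2 * gaussPdf (σ j) (x - μ j) / p j := by
        intro x
        set u := x - μ j
        set A := gaussPdf (σ j) (x - μ j) with hA
        have hApos : 0 < A := gaussPdf_pos (hσ j) _
        have hGpos : 0 < gaussMix p σ μ x := hmixpos μ x
        have hpA : p j * A ≤ gaussMix p σ μ x := hmix_le μ j x
        rw [div_le_div_iff₀ hGpos (hp j)]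
        calc u * u * A * A * p j = u ^ 2 * A * (p j * A) := by ring
          _ ≤ u ^ 2 * A * gaussMix p σ μ x :=
              mul_le_mul_of_nonneg_left hpA
                (mul_nonneg (sq_nonneg u) hApos.le)
          _ = u ^ 2 * A * gaussMix p σ μ x := rfl
      have hIle : (∫ x : ℝ, (x - μ j) * (x - μ j) * gaussPdf (σ j) (x - μ j) *
          gaussPdf (σ j) (x - μ j) / gaussMix p σ μ x) ≤ σ j ^ 2 / p j := by
        have := integral_mono_of_nonneg (Filter.Eventually.of_forall hfnn)
          (hIntSq μ j) (Filter.Eventually.of_forall hle)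
        rw [hIntSqVal μ j] at this
        exact this
      have := mul_le_mul_of_nonneg_left hIle hc
      refine this.trans_eq ?_
      have hσj := (hσ j).ne'
      have hpj := (hp j).ne'
      field_simp
  · -- uniform entry bound
    refine ⟨∑ ℓ, p ℓ / σ ℓ ^ 2, fun μ j h => ?_⟩
    refine (hent μ j h).trans ?_
    have h1 : p j / σ j ^ 2 ≤ ∑ ℓ, p ℓ / σ ℓ ^ 2 :=
      Finset.single_le_sum (f := fun ℓ => p ℓ / σ ℓ ^ 2)
        (fun ℓ _ => div_nonneg (hp ℓ).le (pow_pos (hσ ℓ) 2).le) (Finset.mem_univ j)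
    have h2 : p h / σ h ^ 2 ≤ ∑ ℓ, p ℓ / σ ℓ ^ 2 :=
      Finset.single_le_sum (f := fun ℓ => p ℓ / σ ℓ ^ 2)
        (fun ℓ _ => div_nonneg (hp ℓ).le (pow_pos (hσ ℓ) 2).le) (Finset.mem_univ h)
    linarith
  · -- determinant bound
    set C : ℝ := ∑ ℓ, p ℓ / σ ℓ ^ 2 with hC
    refine ⟨Real.sqrt ((Nat.factorial (m + 2)) * C ^ (m + 2)), fun μ => ?_⟩
    refine Real.sqrt_le_sqrt ?_
    have hdet : |(meanFisher p σ μ).det| ≤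
        Nat.factorial (Fintype.card (Fin (m + 2))) • C ^ (Fintype.card (Fin (m + 2))) := by
      have hx : ∀ i j, |meanFisher p σ μ i j| ≤ C := fun i j => by
        refine (hent μ i j).trans ?_
        have h1 : p i / σ i ^ 2 ≤ C :=
          Finset.single_le_sum (f := fun ℓ => p ℓ / σ ℓ ^ 2)
            (fun ℓ _ => div_nonneg (hp ℓ).le (pow_pos (hσ ℓ) 2).le) (Finset.mem_univ i)
        have h2 : p j / σ j ^ 2 ≤ C :=
          Finset.single_le_sum (f := fun ℓ => p ℓ / σ ℓ ^ 2)
          (fun ℓ _ => div_nonneg (hp ℓ).le (pow_pos (hσ ℓ) 2).le) (Finset.mem_univ j)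
        linarith
      exact Matrix.det_le (A := meanFisher p σ μ)
        (abv := (AbsoluteValue.abs : AbsoluteValue ℝ ℝ)) hx
    rw [Fintype.card_fin, nsmul_eq_mul] at hdet
    exact (le_abs_self _).trans hdet
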